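/- (Sufficiency of the local conditions.) Let T be a tree on vertex set containing sources p₁,…,p_m, sink q, and possibly other points in ℝ^n, where the path P_i in T connects p_i to q. For each edge e of T, let S_e = {i : e lies on P_i}, and define the cost of T as Σ_{edges e=xy} w(Σ_{i∈S_e} t_i)‖x−y‖. Suppose dual vectors p_i*, q* of p_i, q exist satisfying Σ_{i=1}^m w(t_i)p_i* + w(Σ t_i)q* = 0 and ‖Σ_{i∈I} w(t_i)p_i*‖* ≤ w(Σ_{i∈I} t_i) for every I ⊆ {1,…,m}. Then the cost of T is at least the cost of the star network centered at the origin: Σ w(t_i)‖p_i‖ + w(Σ t_i)‖q‖. -/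

import Mathlib

open scoped BigOperators

noncomputable def dualNorm {n : ℕ} (N : EuclideanSpace ℝ (Fin n) → ℝ)
    (z : EuclideanSpace ℝ (Fin n)) : ℝ :=
  sSup ((fun x => (inner ℝ z x : ℝ)) '' {x | N x ≤ 1})

def IsNorm {n : ℕ} (N : EuclideanSpace ℝ (Fin n) → ℝ) : Prop :=
  (∀ x, 0 ≤ N x) ∧ (∀ x, N x = 0 ↔ x = 0) ∧
  (∀ (a : ℝ) (x : EuclideanSpace ℝ (Fin n)), N (a • x) = |a| * N x) ∧
  (∀ x y, N (x + y) ≤ N x + N y)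

section Aux

open SimpleGraph

variable {n : ℕ} {N : EuclideanSpace ℝ (Fin n) → ℝ}

lemma IsNorm.zero (hN : IsNorm N) : N 0 = 0 := (hN.2.1 0).2 rfl

lemma IsNorm.sum_le (hN : IsNorm N) {ι : Type*} (s : Finset ι)
    (f : ι → EuclideanSpace ℝ (Fin n)) : N (∑ i ∈ s, f i) ≤ ∑ i ∈ s, N (f i) := by
  classical
  induction s using Finset.induction_on with
  | empty => simp [hN.zero]
  | insert _ _ h ih =>
    rw [Finset.sum_insert h, Finset.sum_insert h]
    exact (hN.2.2.2 _ _).trans (by linarith)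

lemma euclid_decomp (x : EuclideanSpace ℝ (Fin n)) :
    x = ∑ i, x i • EuclideanSpace.single i (1:ℝ) := by
  ext j
  rw [WithLp.ofLp_sum, Finset.sum_apply]
  simp [EuclideanSpace.single_apply]

lemma abs_coord_le (x : EuclideanSpace ℝ (Fin n)) (i : Fin n) : |x i| ≤ ‖x‖ := by
  rw [EuclideanSpace.norm_eq, ← Real.sqrt_sq_eq_abs]
  apply Real.sqrt_le_sqrt
  calc (x i) ^ 2 = ‖x i‖ ^ 2 := by rw [Real.norm_eq_abs, sq_abs]
    _ ≤ ∑ j, ‖x j‖ ^ 2 :=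
      Finset.single_le_sum (f := fun j => ‖x j‖ ^ 2) (fun j _ => sq_nonneg _) (Finset.mem_univ i)

lemma IsNorm.le_norm (hN : IsNorm N) : ∃ K : ℝ, 0 ≤ K ∧ ∀ x, N x ≤ K * ‖x‖ := by
  refine ⟨∑ i, N (EuclideanSpace.single i (1:ℝ)), Finset.sum_nonneg fun i _ => hN.1 _, fun x => ?_⟩
  calc N x = N (∑ i, x i • EuclideanSpace.single i (1:ℝ)) := by rw [← euclid_decomp]
    _ ≤ ∑ i, N (x i • EuclideanSpace.single i (1:ℝ)) := hN.sum_le _ _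
    _ ≤ ∑ i, N (EuclideanSpace.single i (1:ℝ)) * ‖x‖ := by
        refine Finset.sum_le_sum fun i _ => ?_
        rw [hN.2.2.1, mul_comm]
        exact mul_le_mul_of_nonneg_left (abs_coord_le x i) (hN.1 _)
    _ = _ := by rw [← Finset.sum_mul]

lemma IsNorm.lipschitz (hN : IsNorm N) : ∃ K : ℝ, 0 ≤ K ∧ ∀ x y, |N x - N y| ≤ K * ‖x - y‖ := by
  obtain ⟨K, hK0, hK⟩ := hN.le_norm
  refine ⟨K, hK0, fun x y => abs_sub_le_iff.2 ⟨?_, ?_⟩⟩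
  · have := hN.2.2.2 (x - y) y; simp only [sub_add_cancel] at this
    linarith [hK (x - y)]
  · have := hN.2.2.2 (y - x) x; simp only [sub_add_cancel] at this
    have h3 := hK (y - x)
    rw [norm_sub_rev] at h3
    linarith

lemma IsNorm.continuous (hN : IsNorm N) : Continuous N := by
  obtain ⟨K, hK0, hK⟩ := hN.lipschitz
  have : LipschitzWith (Real.toNNReal K) N := by
    apply LipschitzWith.of_dist_le_mul
    intro x y
    have h := hK x y
    rw [Real.dist_eq, dist_eq_norm]
    calc |N x - N y| ≤ K * ‖x - y‖ := h
      _ ≤ Real.toNNReal K * ‖x - y‖ :=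
        mul_le_mul_of_nonneg_right (Real.le_coe_toNNReal K) (norm_nonneg _)
  exact this.continuous

lemma IsNorm.norm_le (hN : IsNorm N) : ∃ C : ℝ, 0 < C ∧ ∀ x, ‖x‖ ≤ C * N x := by
  by_cases hn : ∃ z : EuclideanSpace ℝ (Fin n), z ≠ 0
  · obtain ⟨z0, hz0⟩ := hn
    have hsph : (Metric.sphere (0 : EuclideanSpace ℝ (Fin n)) 1).Nonempty :=
      ⟨‖z0‖⁻¹ • z0, by simp [norm_smul, abs_inv, inv_mul_cancel₀ (norm_ne_zero_iff.2 hz0)]⟩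
    obtain ⟨z, hz, hzmin⟩ := (isCompact_sphere (0 : EuclideanSpace ℝ (Fin n)) 1).exists_isMinOn
      hsph hN.continuous.continuousOn
    have hzne : z ≠ 0 := by intro h; rw [h] at hz; simp at hz
    have hc : 0 < N z := by
      rcases lt_or_eq_of_le (hN.1 z) with h | h
      · exact h
      · exact absurd ((hN.2.1 z).1 h.symm) hzne
    refine ⟨(N z)⁻¹, inv_pos.2 hc, fun x => ?_⟩
    rcases eq_or_ne x 0 with rfl | hx
    · simp [hN.zero]
    · have hxs : ‖x‖⁻¹ • x ∈ Metric.sphere (0 : EuclideanSpace ℝ (Fin n)) 1 := by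
        simp [norm_smul, abs_inv, inv_mul_cancel₀ (norm_ne_zero_iff.2 hx)]
      have h1 : N z ≤ N (‖x‖⁻¹ • x) := hzmin hxs
      rw [hN.2.2.1, abs_inv, abs_norm] at h1
      have hxpos : 0 < ‖x‖ := norm_pos_iff.2 hx
      rw [inv_mul_eq_div, le_div_iff₀ hc]
      have h2 : ‖x‖ * (‖x‖⁻¹ * N x) = N x := by field_simp
      nlinarith [mul_le_mul_of_nonneg_left h1 hxpos.le]
  · push_neg at hn
    refine ⟨1, one_pos, fun x => ?_⟩
    rw [hn x]; simp [hN.zero]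

lemma IsNorm.inner_le_dual (hN : IsNorm N) (z x : EuclideanSpace ℝ (Fin n)) :
    (inner ℝ z x : ℝ) ≤ dualNorm N z * N x := by
  obtain ⟨C, hC0, hC⟩ := hN.norm_le
  have hbdd : BddAbove ((fun x => (inner ℝ z x : ℝ)) '' {x | N x ≤ 1}) := by
    refine ⟨‖z‖ * C, fun y hy => ?_⟩
    obtain ⟨u, hu, rfl⟩ := hy
    calc (inner ℝ z u : ℝ) ≤ ‖z‖ * ‖u‖ := real_inner_le_norm z u
      _ ≤ ‖z‖ * (C * N u) := mul_le_mul_of_nonneg_left (hC u) (norm_nonneg z)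
      _ ≤ ‖z‖ * (C * 1) := by
          refine mul_le_mul_of_nonneg_left ?_ (norm_nonneg z)
          exact mul_le_mul_of_nonneg_left hu hC0.le
      _ = ‖z‖ * C := by ring
  rcases eq_or_ne x 0 with rfl | hx
  · simp [hN.zero]
  · have hNx : 0 < N x := by
      rcases lt_or_eq_of_le (hN.1 x) with h | h
      · exact h
      · exact absurd ((hN.2.1 x).1 h.symm) hx
    set u := (N x)⁻¹ • x with hu
    have hNu : N u ≤ 1 := by
      rw [hu, hN.2.2.1, abs_inv, abs_of_pos hNx, inv_mul_cancel₀ hNx.ne']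
    have hmem : (inner ℝ z u : ℝ) ∈ (fun x => (inner ℝ z x : ℝ)) '' {x | N x ≤ 1} :=
      ⟨u, hNu, rfl⟩
    have hle : (inner ℝ z u : ℝ) ≤ dualNorm N z := le_csSup hbdd hmem
    have hxu : x = N x • u := by rw [hu, smul_smul, mul_inv_cancel₀ hNx.ne', one_smul]
    calc (inner ℝ z x : ℝ) = N x * (inner ℝ z u : ℝ) := by
          conv_lhs => rw [hxu]
          rw [real_inner_smul_right]
      _ ≤ N x * dualNorm N z := mul_le_mul_of_nonneg_left hle hNx.le
      _ = dualNorm N z * N x := mul_comm _ _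

lemma walk_telescope {V : Type*} {G : SimpleGraph V}
    (pos : V → EuclideanSpace ℝ (Fin n)) {a b : V} (p : G.Walk a b) :
    (p.darts.map (fun d => pos d.fst - pos d.snd)).sum = pos a - pos b := by
  induction p with
  | nil => simp
  | cons h p ih =>
    rw [Walk.darts_cons, List.map_cons, List.sum_cons, ih]
    abel

lemma dart_reach {V : Type*} {G : SimpleGraph V} {a ρ : V}
    (p : G.Walk a ρ) (hp : p.IsPath) (d : G.Dart) (hd : d ∈ p.darts) :
    (G.deleteEdges {d.edge}).Reachable d.snd ρ := by
  induction p with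
  | nil => simp at hd
  | @cons u v w h p ih =>
    rw [Walk.darts_cons, List.mem_cons] at hd
    rcases hd with rfl | hd
    · have hnodup := hp.isTrail.edges_nodup
      rw [Walk.edges_cons, List.nodup_cons] at hnodup
      exact ⟨(p.toDeleteEdge _ hnodup.1)⟩
    · exact ih hp.of_cons hd

lemma dart_consistent {V : Type*} {G : SimpleGraph V} (hG : G.IsAcyclic)
    {a b ρ : V} (p : G.Walk a ρ) (hp : p.IsPath) (p' : G.Walk b ρ) (hp' : p'.IsPath)
    (d d' : G.Dart) (hd : d ∈ p.darts) (hd' : d' ∈ p'.darts)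
    (he : d.edge = d'.edge) : d = d' := by
  rcases (dart_edge_eq_iff d d').1 he with h | h
  · exact h
  · exfalso
    have r1 := dart_reach p hp d hd
    have r2 := dart_reach p' hp' d' hd'
    rw [← he] at r2
    have h2 : d'.toProd.2 = d.toProd.1 := by rw [h]; rfl
    rw [h2] at r2
    have hbr := SimpleGraph.isAcyclic_iff_forall_adj_isBridge.1 hG d.adj
    rw [SimpleGraph.isBridge_iff] at hbr
    apply hbr
    have heq : (G.deleteEdges {d.edge}) = G \ SimpleGraph.fromEdgeSet {s(d.fst, d.snd)} := rfl
    rw [heq] at r1 r2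
    exact (r2.trans r1.symm)

lemma inner_list_sum {α : Type*} (c : EuclideanSpace ℝ (Fin n)) (l : List α)
    (g : α → EuclideanSpace ℝ (Fin n)) :
    (l.map (fun d => (inner ℝ c (g d) : ℝ))).sum = (inner ℝ c (l.map g).sum : ℝ) := by
  induction l with
  | nil => simp
  | cons a l ih =>
    rw [List.map_cons, List.sum_cons, List.map_cons, List.sum_cons, inner_add_right, ih]

end Aux

set_option maxHeartbeats 1000000 in
/-- Sufficiency of the local balancing and collapsing conditions: any Gilbert
arborescence (tree) spanning the sources and the sink costs at least as much
as the star through the origin. -/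
theorem star_cost_le_tree_cost {n m : ℕ} (N : EuclideanSpace ℝ (Fin n) → ℝ)
    (hN : IsNorm N) (hNsymm : ∀ x, N (-x) = N x)
    (p : Fin m → EuclideanSpace ℝ (Fin n)) (q : EuclideanSpace ℝ (Fin n))
    (hp : ∀ i, p i ≠ 0) (hq : q ≠ 0)
    (t : Fin m → ℝ) (ht : ∀ i, 0 < t i) (w : ℝ → ℝ) (hw : ∀ s, 0 ≤ w s)
    (ps : Fin m → EuclideanSpace ℝ (Fin n)) (qs : EuclideanSpace ℝ (Fin n))
    (hps : ∀ i, (inner ℝ (ps i) (p i) : ℝ) = N (p i) ∧ dualNorm N (ps i) = 1)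
    (hqs : (inner ℝ qs q : ℝ) = N q ∧ dualNorm N qs = 1)
    (hbal : ∑ i, w (t i) • ps i + w (∑ i, t i) • qs = 0)
    (hcol : ∀ I : Finset (Fin m),
      dualNorm N (∑ i ∈ I, w (t i) • ps i) ≤ w (∑ i ∈ I, t i))
    -- the tree T
    (V : Type) [Fintype V] [DecidableEq V]
    (G : SimpleGraph V) [DecidableRel G.Adj] (hG : G.IsTree)
    (pos : V → EuclideanSpace ℝ (Fin n))
    (σ : Fin m → V) (ρ : V) (hσ : ∀ i, pos (σ i) = p i) (hρ : pos ρ = q)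
    (W : ∀ i, G.Walk (σ i) ρ) (hW : ∀ i, (W i).IsPath) :
    ∑ i, w (t i) * N (p i) + w (∑ i, t i) * N q ≤
      ∑ e ∈ G.edgeFinset,
        w (∑ i ∈ Finset.univ.filter (fun i => e ∈ (W i).edges), t i) *
          Sym2.lift ⟨fun a b => N (pos a - pos b),
            fun a b => by simp only []; rw [← neg_sub (pos b) (pos a), hNsymm]⟩ e := by
  classical
  -- the oriented displacement of each edge
  set Δ : Sym2 V → EuclideanSpace ℝ (Fin n) := fun e =>
    if h : ∃ jd : Fin m × G.Dart, jd.2 ∈ (W jd.1).darts ∧ jd.2.edge = e then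
      pos h.choose.2.fst - pos h.choose.2.snd else 0 with hΔdef
  have hΔ : ∀ (i : Fin m) (d : G.Dart), d ∈ (W i).darts →
      Δ d.edge = pos d.fst - pos d.snd := by
    intro i d hd
    have hex : ∃ jd : Fin m × G.Dart, jd.2 ∈ (W jd.1).darts ∧ jd.2.edge = d.edge :=
      ⟨(i, d), hd, rfl⟩
    rw [hΔdef]
    simp only [dif_pos hex]
    have := dart_consistent hG.2 (W hex.choose.1) (hW _) (W i) (hW i)
      hex.choose.2 d hex.choose_spec.1 hd hex.choose_spec.2
    rw [this]
  -- step A: per-source rewriting of the dart sum as an edge sum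
  have hstepA : ∀ i : Fin m,
      ((W i).darts.map (fun d => (inner ℝ (w (t i) • ps i) (pos d.fst - pos d.snd) : ℝ))).sum
        = ∑ e ∈ G.edgeFinset.filter (fun e => e ∈ (W i).edges),
            (inner ℝ (w (t i) • ps i) (Δ e) : ℝ) := by
    intro i
    have h1 : ((W i).darts.map
          (fun d => (inner ℝ (w (t i) • ps i) (pos d.fst - pos d.snd) : ℝ))).sum
        = ((W i).darts.map (fun d => (inner ℝ (w (t i) • ps i) (Δ d.edge) : ℝ))).sum := by
      congr 1
      apply List.map_congr_left
      intro d hd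
      rw [hΔ i d hd]
    rw [h1]
    have h2 : (W i).darts.map (fun d => (inner ℝ (w (t i) • ps i) (Δ d.edge) : ℝ))
        = (W i).edges.map (fun e => (inner ℝ (w (t i) • ps i) (Δ e) : ℝ)) := by
      have : (W i).edges = (W i).darts.map SimpleGraph.Dart.edge := rfl
      rw [this, List.map_map]
      rfl
    rw [h2]
    have hnodup : (W i).edges.Nodup := (hW i).isTrail.edges_nodup
    rw [← List.sum_toFinset _ hnodup]
    apply Finset.sum_congr
    · ext e
      simp only [List.mem_toFinset, Finset.mem_filter, SimpleGraph.mem_edgeFinset]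
      exact ⟨fun he => ⟨(W i).edges_subset_edgeSet he, he⟩, fun h => h.2⟩
    · intros; rfl
  -- telescoping: dart sums compute the star quantities
  have hstepB : ∀ i : Fin m,
      ((W i).darts.map (fun d => (inner ℝ (w (t i) • ps i) (pos d.fst - pos d.snd) : ℝ))).sum
        = (inner ℝ (w (t i) • ps i) (p i - q) : ℝ) := by
    intro i
    rw [inner_list_sum, walk_telescope pos (W i), hσ, hρ]
  -- the star value as a sum of inner products
  have hstar : ∑ i, w (t i) * N (p i) + w (∑ i, t i) * N q
      = ∑ i, (inner ℝ (w (t i) • ps i) (p i - q) : ℝ) := by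
    have hterm : ∀ i : Fin m, (inner ℝ (w (t i) • ps i) (p i - q) : ℝ)
        = w (t i) * N (p i) - (inner ℝ (w (t i) • ps i) q : ℝ) := by
      intro i
      rw [inner_sub_right, real_inner_smul_left, (hps i).1]
    rw [Finset.sum_congr rfl (fun i _ => hterm i), Finset.sum_sub_distrib, ← sum_inner]
    have hb2 : ∑ i, w (t i) • ps i = -(w (∑ i, t i) • qs) :=
      eq_neg_of_add_eq_zero_left hbal
    rw [hb2, inner_neg_left, real_inner_smul_left, hqs.1]
    ring
  -- main chain
  calc ∑ i, w (t i) * N (p i) + w (∑ i, t i) * N q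
      = ∑ i, (inner ℝ (w (t i) • ps i) (p i - q) : ℝ) := hstar
    _ = ∑ i, ∑ e ∈ G.edgeFinset.filter (fun e => e ∈ (W i).edges),
          (inner ℝ (w (t i) • ps i) (Δ e) : ℝ) := by
        refine Finset.sum_congr rfl fun i _ => ?_
        rw [← hstepA i, hstepB i]
    _ = ∑ e ∈ G.edgeFinset, ∑ i ∈ Finset.univ.filter (fun i => e ∈ (W i).edges),
          (inner ℝ (w (t i) • ps i) (Δ e) : ℝ) := by
        simp only [Finset.sum_filter]
        rw [Finset.sum_comm]
    _ = ∑ e ∈ G.edgeFinset,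
          (inner ℝ (∑ i ∈ Finset.univ.filter (fun i => e ∈ (W i).edges), w (t i) • ps i)
            (Δ e) : ℝ) := by
        refine Finset.sum_congr rfl fun e _ => ?_
        rw [sum_inner]
    _ ≤ ∑ e ∈ G.edgeFinset,
          w (∑ i ∈ Finset.univ.filter (fun i => e ∈ (W i).edges), t i) *
            Sym2.lift ⟨fun a b => N (pos a - pos b),
              fun a b => by simp only []; rw [← neg_sub (pos b) (pos a), hNsymm]⟩ e := by
        refine Finset.sum_le_sum fun e he => ?_
        have hlift : N (Δ e) ≤ Sym2.lift ⟨fun a b => N (pos a - pos b),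
            fun a b => by simp only []; rw [← neg_sub (pos b) (pos a), hNsymm]⟩ e := by
          by_cases hex : ∃ jd : Fin m × G.Dart, jd.2 ∈ (W jd.1).darts ∧ jd.2.edge = e
          · obtain ⟨⟨i, d⟩, hd, rfl⟩ := hex
            rw [hΔ i d hd]
            have hde : d.edge = s(d.toProd.1, d.toProd.2) := rfl
            rw [hde, Sym2.lift_mk]
          · rw [hΔdef]
            simp only [dif_neg hex, hN.zero]
            induction e using Sym2.ind with
            | _ a b => rw [Sym2.lift_mk]; exact hN.1 _
        calc (inner ℝ (∑ i ∈ Finset.univ.filter (fun i => e ∈ (W i).edges), w (t i) • ps i)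
              (Δ e) : ℝ)
            ≤ dualNorm N (∑ i ∈ Finset.univ.filter (fun i => e ∈ (W i).edges),
                w (t i) • ps i) * N (Δ e) := hN.inner_le_dual _ _
          _ ≤ w (∑ i ∈ Finset.univ.filter (fun i => e ∈ (W i).edges), t i) * N (Δ e) :=
              mul_le_mul_of_nonneg_right (hcol _) (hN.1 _)
          _ ≤ _ := mul_le_mul_of_nonneg_left hlift (hw _)
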